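/- Let m, N be positive integers, let Q ∈ ℂ^{N×N} be unitary, and let (e_w)_{w=1}^{N} be the standard basis of ℂ^{N}. Suppose M^{(a)} = Σ_{w=1}^{N} Σ_{i=1}^{m} (u^{(a)}_{w,i} ⊗ Q^{*} e_w) s^{(a)}_{w,i} (v^{(a)}_{w,i} ⊗ Q^{*} e_w)^{*} and M^{(b)} = Σ_{w=1}^{N} Σ_{j=1}^{m} (u^{(b)}_{w,j} ⊗ Q^{*} e_w) s^{(b)}_{w,j} (v^{(b)}_{w,j} ⊗ Q^{*} e_w)^{*}, where s^{(a)}_{w,i}, s^{(b)}_{w,j} ≥ 0 and, for each w, (u^{(a)}_{w,i})_i, (v^{(a)}_{w,i})_i, (u^{(b)}_{w,j})_j, (v^{(b)}_{w,j})_j are orthonormal families in ℂ^{m}. Then for all permutation matrices P, P' ∈ ℝ^{m×m} (regarded as complex matrices), ‖M^{(a)} − (P ⊗ I_N) M^{(b)} (P' ⊗ I_N)^⊤‖² = ‖M^{(a)}‖² + ‖M^{(b)}‖² − 2 Re Σ_{w=1}^{N} Σ_{i=1}^{m} Σ_{j=1}^{m} s^{(a)}_{w,i} s^{(b)}_{w,j}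 \overline{(u^{(a)}_{w,i})^{*}(P u^{(b)}_{w,j})} (v^{(a)}_{w,i})^{*}(P' v^{(b)}_{w,j}). Consequently, a pair (P, P') minimizes ‖M^{(a)} − (P ⊗ I_N) M^{(b)} (P' ⊗ I_N)^⊤‖ over pairs of permutation matrices if and only if it maximizes Re Σ_{w,i,j} s^{(a)}_{w,i} s^{(b)}_{w,j} \overline{(u^{(a)}_{w,i})^{*}(P u^{(b)}_{w,j})} (v^{(a)}_{w,i})^{*}(P' v^{(b)}_{w,j}). -/

import Mathlib

open Matrix
open scoped Kronecker ComplexConjugate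

/-- A permutation matrix: a 0-1 matrix with exactly one 1 in each row and each column. -/
def IsPermMatrix {k : ℕ} (P : Matrix (Fin k) (Fin k) ℝ) : Prop :=
  (∀ i j, P i j = 0 ∨ P i j = 1) ∧ (∀ i, ∃! j, P i j = 1) ∧ (∀ j, ∃! i, P i j = 1)

/-- The outer product `a b*` of two complex vectors: entry `(i, j)` is `a i * conj (b j)`. -/
noncomputable def outerC {α β : Type*} (a : α → ℂ) (b : β → ℂ) : Matrix α β ℂ :=
  Matrix.of fun i j => a i * conj (b j)

/-- The Kronecker product `a ⊗ b` of two vectors (regarded as one-column matrices). -/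
def kronVec {α β : Type*} (a : α → ℂ) (b : β → ℂ) : α × β → ℂ := fun p => a p.1 * b p.2

/-- A real matrix regarded as a complex matrix. -/
def toC {k : ℕ} (P : Matrix (Fin k) (Fin k) ℝ) : Matrix (Fin k) (Fin k) ℂ :=
  P.map Complex.ofReal

/-- The Hermitian inner product `a* b = Σ_i conj (a i) * b i` on ℂ^k. -/
noncomputable def sdotC {k : ℕ} (a b : Fin k → ℂ) : ℂ := ∑ i, conj (a i) * b i

/-- Frobenius norm squared of a complex matrix: `Σ_{i,j} |A_{ij}|²`. -/
noncomputable def frobC2 {α β : Type*} [Fintype α] [Fintype β] (A : Matrix α β ℂ) : ℝ :=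
  ∑ i, ∑ j, Complex.normSq (A i j)

/- ### Auxiliary definitions and lemmas -/

noncomputable def dotC {α : Type*} [Fintype α] (a b : α → ℂ) : ℂ := ∑ i, conj (a i) * b i

lemma sdotC_eq_dotC {k : ℕ} (a b : Fin k → ℂ) : sdotC a b = dotC a b := rfl

noncomputable def innerM {α β : Type*} [Fintype α] [Fintype β] (A B : Matrix α β ℂ) : ℂ :=
  ∑ i, ∑ j, conj (A i j) * B i j

section Aux
variable {α β : Type*} [Fintype α] [Fintype β]

lemma frob_sub (A B : Matrix α β ℂ) :
    frobC2 (A - B) = frobC2 A + frobC2 B - 2 * (innerM A B).re := by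
  simp only [frobC2, innerM, Complex.re_sum, Finset.mul_sum, ← Finset.sum_add_distrib,
    ← Finset.sum_sub_distrib]
  refine Finset.sum_congr rfl fun i _ => Finset.sum_congr rfl fun j _ => ?_
  rw [Matrix.sub_apply, Complex.normSq_sub]
  congr 1
  rw [← Complex.conj_re (A i j * conj (B i j))]
  simp [mul_comm]

lemma frob_eq (A : Matrix α β ℂ) : frobC2 A = (innerM A A).re := by
  simp only [frobC2, innerM, Complex.re_sum]
  refine Finset.sum_congr rfl fun i _ => Finset.sum_congr rfl fun j _ => ?_
  have : conj (A i j) * A i j = (Complex.normSq (A i j) : ℂ) := by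
    rw [mul_comm, Complex.mul_conj]
  rw [this, Complex.ofReal_re]

lemma frob_nonneg (A : Matrix α β ℂ) : 0 ≤ frobC2 A :=
  Finset.sum_nonneg fun i _ => Finset.sum_nonneg fun j _ => Complex.normSq_nonneg _

lemma innerM_add_left (A A' B : Matrix α β ℂ) : innerM (A + A') B = innerM A B + innerM A' B := by
  simp [innerM, add_mul, Finset.sum_add_distrib]

lemma innerM_zero_left (B : Matrix α β ℂ) : innerM 0 B = 0 := by simp [innerM]

lemma innerM_sum_left {ι : Type*} (s : Finset ι) (f : ι → Matrix α β ℂ) (B : Matrix α β ℂ) :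
    innerM (∑ k ∈ s, f k) B = ∑ k ∈ s, innerM (f k) B := by
  classical
  induction s using Finset.induction_on with
  | empty => simp [innerM_zero_left]
  | insert _ _ h ih => simp [Finset.sum_insert h, innerM_add_left, ih]

lemma innerM_add_right (A B B' : Matrix α β ℂ) : innerM A (B + B') = innerM A B + innerM A B' := by
  simp [innerM, mul_add, Finset.sum_add_distrib]

lemma innerM_zero_right (A : Matrix α β ℂ) : innerM A 0 = 0 := by simp [innerM]

lemma innerM_sum_right {ι : Type*} (s : Finset ι) (A : Matrix α β ℂ) (f : ι → Matrix α β ℂ) :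
    innerM A (∑ k ∈ s, f k) = ∑ k ∈ s, innerM A (f k) := by
  classical
  induction s using Finset.induction_on with
  | empty => simp [innerM_zero_right]
  | insert _ _ h ih => simp [Finset.sum_insert h, innerM_add_right, ih]

lemma innerM_smul_left (c : ℂ) (A B : Matrix α β ℂ) : innerM (c • A) B = conj c * innerM A B := by
  simp [innerM, Finset.mul_sum, mul_assoc]

lemma innerM_smul_right (c : ℂ) (A B : Matrix α β ℂ) : innerM A (c • B) = c * innerM A B := by
  simp only [innerM, Matrix.smul_apply, smul_eq_mul, Finset.mul_sum]
  refine Finset.sum_congr rfl fun i _ => Finset.sum_congr rfl fun j _ => by ring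

lemma innerM_outer (a c : α → ℂ) (b d : β → ℂ) :
    innerM (outerC a b) (outerC c d) = dotC a c * conj (dotC b d) := by
  have h : conj (dotC b d) = ∑ j, b j * conj (d j) := by
    simp [dotC, map_sum, _root_.map_mul]
  rw [h, dotC, Finset.sum_mul_sum]
  simp only [innerM, outerC, Matrix.of_apply, _root_.map_mul, Complex.conj_conj]
  refine Finset.sum_congr rfl fun i _ => Finset.sum_congr rfl fun j _ => by ring

lemma dotC_kron (u u' : α → ℂ) (q q' : β → ℂ) :
    dotC (kronVec u q) (kronVec u' q') = dotC u u' * dotC q q' := by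
  rw [dotC, dotC, dotC, Finset.sum_mul_sum]
  rw [show (Finset.univ : Finset (α × β)) = Finset.univ ×ˢ Finset.univ from rfl]
  rw [Finset.sum_product]
  refine Finset.sum_congr rfl fun i _ => Finset.sum_congr rfl fun j _ => ?_
  simp only [kronVec, _root_.map_mul]
  ring

end Aux

lemma perm_tr {k : ℕ} {P : Matrix (Fin k) (Fin k) ℝ} (hP : IsPermMatrix P) : Pᵀ * P = 1 := by
  obtain ⟨h01, hrow, hcol⟩ := hP
  ext j j'
  rw [Matrix.mul_apply, Matrix.one_apply]
  by_cases h : j = j'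
  · subst h
    simp only [if_pos rfl]
    obtain ⟨i0, hi0, hi0u⟩ := hcol j
    rw [Finset.sum_eq_single i0]
    · simp [Matrix.transpose_apply, hi0]
    · intro i _ hne
      rcases h01 i j with h0 | h1
      · simp [Matrix.transpose_apply, h0]
      · exact absurd (hi0u i h1) hne
    · simp
  · rw [if_neg h]
    refine Finset.sum_eq_zero fun i _ => ?_
    rcases h01 i j with h0 | h1
    · simp [Matrix.transpose_apply, h0]
    · rcases h01 i j' with h0' | h1'
      · simp [Matrix.transpose_apply, h0']
      · obtain ⟨c, hc, hcu⟩ := hrow i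
        exact absurd ((hcu j h1).trans (hcu j' h1').symm) h

lemma toC_conjTranspose {k : ℕ} (P : Matrix (Fin k) (Fin k) ℝ) : (toC P)ᴴ = toC Pᵀ := by
  ext i j
  simp [toC, Matrix.conjTranspose_apply, Complex.conj_ofReal]

lemma toC_mul {k : ℕ} (P Q : Matrix (Fin k) (Fin k) ℝ) : toC (P * Q) = toC P * toC Q := by
  ext i j
  simp [toC, Matrix.mul_apply]

lemma perm_dot {k : ℕ} {P : Matrix (Fin k) (Fin k) ℝ} (hP : IsPermMatrix P) (u u' : Fin k → ℂ) :
    dotC (toC P *ᵥ u) (toC P *ᵥ u') = dotC u u' := by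
  have h1 : dotC (toC P *ᵥ u) (toC P *ᵥ u') = star (toC P *ᵥ u) ⬝ᵥ (toC P *ᵥ u') := rfl
  rw [h1, Matrix.star_mulVec, Matrix.dotProduct_mulVec,
    Matrix.vecMul_vecMul, toC_conjTranspose, ← toC_mul, perm_tr hP]
  simp [toC]
  rfl

lemma key {m N : ℕ} (P P' : Matrix (Fin m) (Fin m) ℝ) (u v : Fin m → ℂ) (q q' : Fin N → ℂ) :
    (toC P ⊗ₖ (1 : Matrix (Fin N) (Fin N) ℂ)) * outerC (kronVec u q) (kronVec v q')
      * (toC P' ⊗ₖ (1 : Matrix (Fin N) (Fin N) ℂ))ᵀ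
    = outerC (kronVec (toC P *ᵥ u) q) (kronVec (toC P' *ᵥ v) q') := by
  ext ⟨i, w⟩ ⟨j, w'⟩
  simp only [Matrix.mul_apply, Matrix.transpose_apply, Matrix.kroneckerMap_apply,
    Matrix.one_apply, outerC, kronVec, Matrix.of_apply, Fintype.sum_prod_type, mulVec,
    dotProduct, toC, Matrix.map_apply, _root_.map_mul, Complex.conj_ofReal,
    mul_ite, ite_mul, mul_zero, zero_mul, mul_one, one_mul, Finset.sum_ite_eq,
    Finset.sum_ite_eq', Finset.mem_univ, if_true, map_sum, Finset.sum_mul, Finset.mul_sum]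
  refine Finset.sum_congr rfl fun k _ => Finset.sum_congr rfl fun l _ => by ring

lemma conj_ite01 (p : Prop) [Decidable p] :
    conj (if p then (1 : ℂ) else 0) = if p then 1 else 0 := by
  split <;> simp

lemma conj_ite (p : Prop) [Decidable p] (a b : ℂ) :
    conj (if p then a else b) = if p then conj a else conj b := by
  split <;> rfl

lemma inner_decomp {m N : ℕ} (q : Fin N → Fin N → ℂ)
    (hq : ∀ w w', dotC (q w) (q w') = if w = w' then 1 else 0)
    (c d : Fin N → Fin m → ℝ) (A B C D : Fin N → Fin m → Fin m → ℂ) :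
    innerM (∑ w, ∑ i, (c w i : ℂ) • outerC (kronVec (A w i) (q w)) (kronVec (B w i) (q w)))
        (∑ w, ∑ j, (d w j : ℂ) • outerC (kronVec (C w j) (q w)) (kronVec (D w j) (q w)))
    = ∑ w, ∑ i, ∑ j, (c w i : ℂ) * (d w j : ℂ)
        * (dotC (A w i) (C w j) * conj (dotC (B w i) (D w j))) := by
  simp only [innerM_sum_left, innerM_sum_right, innerM_smul_left, innerM_smul_right,
    innerM_outer, dotC_kron, hq, Complex.conj_ofReal, _root_.map_mul, conj_ite01, conj_ite,
    map_zero, mul_ite, ite_mul, mul_one, one_mul, mul_zero, zero_mul, eq_self_iff_true, if_true,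
    Finset.sum_ite_eq, Finset.mem_univ, Finset.sum_ite_eq', Finset.sum_const_zero,
    Finset.sum_ite_irrel, Finset.mul_sum]
  refine Finset.sum_congr rfl fun w _ => ?_
  rw [Finset.sum_comm]
  refine Finset.sum_congr rfl fun i _ => Finset.sum_congr rfl fun j _ => by ring

lemma frob_decomp {m N : ℕ} (q : Fin N → Fin N → ℂ)
    (hq : ∀ w w', dotC (q w) (q w') = if w = w' then 1 else 0)
    (c : Fin N → Fin m → ℝ) (A B : Fin N → Fin m → Fin m → ℂ)
    (hA : ∀ w i i', dotC (A w i) (A w i') = if i = i' then 1 else 0)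
    (hB : ∀ w i i', dotC (B w i) (B w i') = if i = i' then 1 else 0) :
    frobC2 (∑ w, ∑ i, (c w i : ℂ) • outerC (kronVec (A w i) (q w)) (kronVec (B w i) (q w)))
      = ∑ w, ∑ i, (c w i) ^ 2 := by
  rw [frob_eq, inner_decomp q hq c c A B A B]
  simp only [hA, hB, conj_ite01, mul_ite, ite_mul, mul_one, one_mul, mul_zero,
    zero_mul, eq_self_iff_true, if_true, Finset.sum_ite_eq, Finset.sum_ite_eq',
    Finset.mem_univ]
  rw [Complex.re_sum]
  refine Finset.sum_congr rfl fun w _ => ?_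
  rw [Complex.re_sum]
  refine Finset.sum_congr rfl fun i _ => ?_
  rw [show ((c w i : ℂ) * (c w i : ℂ)) = ((c w i ^ 2 : ℝ) : ℂ) by push_cast; ring,
    Complex.ofReal_re]

theorem stmt14 {m N : ℕ} (hm : 0 < m) (hN : 0 < N)
    (Q : Matrix (Fin N) (Fin N) ℂ) (hQ : Qᴴ * Q = 1)
    (e : Fin N → Fin N → ℂ) (he : ∀ w j, e w j = if j = w then 1 else 0)
    (sa sb : Fin N → Fin m → ℝ) (hsa : ∀ w i, 0 ≤ sa w i) (hsb : ∀ w j, 0 ≤ sb w j)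
    (ua va ub vb : Fin N → Fin m → Fin m → ℂ)
    (hua : ∀ w i j, sdotC (ua w i) (ua w j) = if i = j then 1 else 0)
    (hva : ∀ w i j, sdotC (va w i) (va w j) = if i = j then 1 else 0)
    (hub : ∀ w i j, sdotC (ub w i) (ub w j) = if i = j then 1 else 0)
    (hvb : ∀ w i j, sdotC (vb w i) (vb w j) = if i = j then 1 else 0)
    (Ma Mb : Matrix (Fin m × Fin N) (Fin m × Fin N) ℂ)
    (hMa : Ma = ∑ w, ∑ i, (sa w i : ℂ) •
        outerC (kronVec (ua w i) (Qᴴ *ᵥ e w)) (kronVec (va w i) (Qᴴ *ᵥ e w)))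
    (hMb : Mb = ∑ w, ∑ j, (sb w j : ℂ) •
        outerC (kronVec (ub w j) (Qᴴ *ᵥ e w)) (kronVec (vb w j) (Qᴴ *ᵥ e w))) :
    (∀ P P' : Matrix (Fin m) (Fin m) ℝ, IsPermMatrix P → IsPermMatrix P' →
      frobC2 (Ma - (toC P ⊗ₖ (1 : Matrix (Fin N) (Fin N) ℂ)) * Mb
          * (toC P' ⊗ₖ (1 : Matrix (Fin N) (Fin N) ℂ))ᵀ)
        = frobC2 Ma + frobC2 Mb
          - 2 * (∑ w, ∑ i, ∑ j, (sa w i : ℂ) * (sb w j : ℂ) *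
              conj (sdotC (ua w i) (toC P *ᵥ ub w j))
                * sdotC (va w i) (toC P' *ᵥ vb w j)).re)
    ∧ (∀ P P' : Matrix (Fin m) (Fin m) ℝ, IsPermMatrix P → IsPermMatrix P' →
        ((∀ R R' : Matrix (Fin m) (Fin m) ℝ, IsPermMatrix R → IsPermMatrix R' →
            Real.sqrt (frobC2 (Ma - (toC P ⊗ₖ (1 : Matrix (Fin N) (Fin N) ℂ)) * Mb
                * (toC P' ⊗ₖ (1 : Matrix (Fin N) (Fin N) ℂ))ᵀ))
              ≤ Real.sqrt (frobC2 (Ma - (toC R ⊗ₖ (1 : Matrix (Fin N) (Fin N) ℂ)) * Mb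
                * (toC R' ⊗ₖ (1 : Matrix (Fin N) (Fin N) ℂ))ᵀ)))
          ↔ (∀ R R' : Matrix (Fin m) (Fin m) ℝ, IsPermMatrix R → IsPermMatrix R' →
              (∑ w, ∑ i, ∑ j, (sa w i : ℂ) * (sb w j : ℂ) *
                  conj (sdotC (ua w i) (toC R *ᵥ ub w j))
                    * sdotC (va w i) (toC R' *ᵥ vb w j)).re
                ≤ (∑ w, ∑ i, ∑ j, (sa w i : ℂ) * (sb w j : ℂ) *
                  conj (sdotC (ua w i) (toC P *ᵥ ub w j))
                    * sdotC (va w i) (toC P' *ᵥ vb w j)).re))) := by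
  classical
  have hQQ : Q * Qᴴ = 1 := mul_eq_one_comm.mp hQ
  set q : Fin N → Fin N → ℂ := fun w => Qᴴ *ᵥ e w with hqdef
  have hqk : ∀ w k, q w k = Qᴴ k w := by
    intro w k
    simp [hqdef, Matrix.mulVec, dotProduct, he]
  have hq : ∀ w w', dotC (q w) (q w') = if w = w' then 1 else 0 := by
    intro w w'
    have h1 : dotC (q w) (q w') = (Q * Qᴴ) w w' := by
      rw [dotC, Matrix.mul_apply]
      refine Finset.sum_congr rfl fun k _ => ?_
      rw [hqk, hqk]
      simp [Matrix.conjTranspose_apply]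
    rw [h1, hQQ, Matrix.one_apply]
  have hMa' : Ma = ∑ w, ∑ i, (sa w i : ℂ) •
      outerC (kronVec (ua w i) (q w)) (kronVec (va w i) (q w)) := hMa
  have hMb' : Mb = ∑ w, ∑ j, (sb w j : ℂ) •
      outerC (kronVec (ub w j) (q w)) (kronVec (vb w j) (q w)) := hMb
  have hX : ∀ P P' : Matrix (Fin m) (Fin m) ℝ,
      (toC P ⊗ₖ (1 : Matrix (Fin N) (Fin N) ℂ)) * Mb
          * (toC P' ⊗ₖ (1 : Matrix (Fin N) (Fin N) ℂ))ᵀ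
        = ∑ w, ∑ j, (sb w j : ℂ) • outerC (kronVec (toC P *ᵥ ub w j) (q w))
            (kronVec (toC P' *ᵥ vb w j) (q w)) := by
    intro P P'
    rw [hMb']
    simp only [Finset.mul_sum, Finset.sum_mul, Matrix.mul_smul, Matrix.smul_mul, key]
  have frobMa : frobC2 Ma = ∑ w, ∑ i, (sa w i) ^ 2 := by
    rw [hMa']
    exact frob_decomp q hq sa ua va (fun w i i' => hua w i i') (fun w i i' => hva w i i')
  have frobMb : frobC2 Mb = ∑ w, ∑ j, (sb w j) ^ 2 := by
    rw [hMb']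
    exact frob_decomp q hq sb ub vb (fun w i i' => hub w i i') (fun w i i' => hvb w i i')
  have frobX : ∀ P P' : Matrix (Fin m) (Fin m) ℝ, IsPermMatrix P → IsPermMatrix P' →
      frobC2 ((toC P ⊗ₖ (1 : Matrix (Fin N) (Fin N) ℂ)) * Mb
          * (toC P' ⊗ₖ (1 : Matrix (Fin N) (Fin N) ℂ))ᵀ) = ∑ w, ∑ j, (sb w j) ^ 2 := by
    intro P P' hP hP'
    rw [hX]
    exact frob_decomp q hq sb _ _
      (fun w i i' => by rw [perm_dot hP]; exact hub w i i')
      (fun w i i' => by rw [perm_dot hP']; exact hvb w i i')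
  have cross : ∀ P P' : Matrix (Fin m) (Fin m) ℝ,
      innerM Ma ((toC P ⊗ₖ (1 : Matrix (Fin N) (Fin N) ℂ)) * Mb
          * (toC P' ⊗ₖ (1 : Matrix (Fin N) (Fin N) ℂ))ᵀ)
        = ∑ w, ∑ i, ∑ j, (sa w i : ℂ) * (sb w j : ℂ)
            * (dotC (ua w i) (toC P *ᵥ ub w j) * conj (dotC (va w i) (toC P' *ᵥ vb w j))) := by
    intro P P'
    rw [hMa', hX]
    exact inner_decomp q hq sa sb ua va _ _
  have part1 : ∀ P P' : Matrix (Fin m) (Fin m) ℝ, IsPermMatrix P → IsPermMatrix P' →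
      frobC2 (Ma - (toC P ⊗ₖ (1 : Matrix (Fin N) (Fin N) ℂ)) * Mb
          * (toC P' ⊗ₖ (1 : Matrix (Fin N) (Fin N) ℂ))ᵀ)
        = frobC2 Ma + frobC2 Mb
          - 2 * (∑ w, ∑ i, ∑ j, (sa w i : ℂ) * (sb w j : ℂ) *
              conj (sdotC (ua w i) (toC P *ᵥ ub w j))
                * sdotC (va w i) (toC P' *ᵥ vb w j)).re := by
    intro P P' hP hP'
    rw [frob_sub, frobX P P' hP hP', frobMb]
    have h3 : (∑ w, ∑ i, ∑ j, (sa w i : ℂ) * (sb w j : ℂ) *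
          conj (sdotC (ua w i) (toC P *ᵥ ub w j)) * sdotC (va w i) (toC P' *ᵥ vb w j))
        = conj (innerM Ma ((toC P ⊗ₖ (1 : Matrix (Fin N) (Fin N) ℂ)) * Mb
            * (toC P' ⊗ₖ (1 : Matrix (Fin N) (Fin N) ℂ))ᵀ)) := by
      rw [cross P P']
      simp only [map_sum, _root_.map_mul, Complex.conj_conj, Complex.conj_ofReal, sdotC_eq_dotC]
      refine Finset.sum_congr rfl fun w _ => Finset.sum_congr rfl fun i _ =>
        Finset.sum_congr rfl fun j _ => by ring
    rw [h3, Complex.conj_re]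
  refine ⟨part1, ?_⟩
  intro P P' hP hP'
  constructor
  · intro h R R' hR hR'
    have h1 := h R R' hR hR'
    rw [Real.sqrt_le_sqrt_iff (frob_nonneg _)] at h1
    rw [part1 P P' hP hP', part1 R R' hR hR'] at h1
    linarith
  · intro h R R' hR hR'
    have h1 := h R R' hR hR'
    apply Real.sqrt_le_sqrt
    rw [part1 P P' hP hP', part1 R R' hR hR']
    linarith
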